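/- There exist constants C > 0 and θ₀ > 0 such that for all θ ∈ (0, θ₀), if φ satisfies (1 - tan φ)·cos(φ + θ) = 1 - sin(φ + θ) with 0 < φ < π/4, then |θ - φ²/2| ≤ C·φ³. -/

import Mathlib

open Real

lemma aux_arctan_le_self {t : ℝ} (ht : 0 ≤ t) : Real.arctan t ≤ t := by
  have hd : ∀ s : ℝ, HasDerivAt (fun y => y - Real.arctan y) (1 - 1 / (1 + s ^ 2)) s :=
    fun s => (hasDerivAt_id s).sub (Real.hasDerivAt_arctan s)
  have mono : Monotone (fun y => y - Real.arctan y) := by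
    apply monotone_of_deriv_nonneg (fun s => (hd s).differentiableAt)
    intro s
    rw [(hd s).deriv]
    have h1 : (0:ℝ) < 1 + s ^ 2 := by positivity
    have h2 : 1 / (1 + s ^ 2) ≤ 1 := by
      rw [div_le_one h1]; nlinarith
    linarith
  have := mono ht
  simpa [Real.arctan_zero] using this

lemma aux_le_arctan {t : ℝ} (ht : 0 ≤ t) : t - t ^ 3 / 3 ≤ Real.arctan t := by
  have hd : ∀ s : ℝ, HasDerivAt (fun y => Real.arctan y - (y - y ^ 3 / 3))
      (1 / (1 + s ^ 2) - (1 - s ^ 2)) s := by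
    intro s
    have h1 : HasDerivAt (fun y : ℝ => y - y ^ 3 / 3) (1 - s ^ 2) s := by
      have := ((hasDerivAt_pow 3 s).div_const 3)
      have h2 := (hasDerivAt_id' s).sub this
      exact h2.congr_deriv (by norm_num)
    exact (Real.hasDerivAt_arctan s).sub h1
  have mono : Monotone (fun y => Real.arctan y - (y - y ^ 3 / 3)) := by
    apply monotone_of_deriv_nonneg (fun s => (hd s).differentiableAt)
    intro s
    rw [(hd s).deriv]
    have h1 : (0:ℝ) < 1 + s ^ 2 := by positivity
    have h2 : (1 - s ^ 2) ≤ 1 / (1 + s ^ 2) := by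
      rw [le_div_iff₀ h1]; nlinarith [sq_nonneg (s ^ 2)]
    linarith
  have := mono ht
  simp only [Real.arctan_zero] at this
  simpa using this

set_option maxHeartbeats 1000000 in
theorem stmt_2 : ∃ C > (0:ℝ), ∃ θ₀ > (0:ℝ), ∀ θ : ℝ, θ ∈ Set.Ioo 0 θ₀ →
    ∀ φ : ℝ, 0 < φ → φ < Real.pi / 4 →
      (1 - Real.tan φ) * Real.cos (φ + θ) = 1 - Real.sin (φ + θ) →
      |θ - φ ^ 2 / 2| ≤ C * φ ^ 3 := by
  refine ⟨8, by norm_num, 1/2, by norm_num, ?_⟩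
  intro θ hθ φ hφ0 hφ4 heq
  obtain ⟨hθ0, hθ2⟩ := hθ
  have hπ3 : (3.141592:ℝ) < π := Real.pi_gt_d6
  have hπ4 : π < 3.15 := Real.pi_lt_d2
  have hφ1 : φ < 1 := by linarith
  -- the half-angle
  set x := (φ + θ) / 2 with hxdef
  have hψ : φ + θ = 2 * x := by ring
  have hx0 : 0 < x := by positivity
  have hx4 : x < π / 4 := by
    simp only [hxdef]
    linarith
  have hx2 : x < π / 2 := by linarith
  have hcx : 0 < Real.cos x := Real.cos_pos_of_mem_Ioo ⟨by linarith, hx2⟩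
  have hcφ : 0 < Real.cos φ := Real.cos_pos_of_mem_Ioo ⟨by linarith, by linarith⟩
  -- tan x < 1 and sin x < cos x
  have htx1 : Real.tan x < 1 := by
    have := Real.tan_lt_tan_of_nonneg_of_lt_pi_div_two hx0.le (by linarith) hx4
    rwa [Real.tan_pi_div_four] at this
  have hsc : Real.sin x < Real.cos x := by
    have := htx1
    rw [Real.tan_eq_sin_div_cos, div_lt_one hcx] at this
    exact this
  -- tan φ bounds
  set u := Real.tan φ with hudef
  have hu1 : φ < u := Real.lt_tan hφ0 (by linarith)
  have hu2 : u ≤ φ + φ ^ 3 := by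
    have hsin : Real.sin φ ≤ φ := Real.sin_le hφ0.le
    have hcos : 1 - φ ^ 2 / 2 ≤ Real.cos φ := Real.one_sub_sq_div_two_le_cos
    rw [hudef, Real.tan_eq_sin_div_cos, div_le_iff₀ hcφ]
    nlinarith [mul_le_mul_of_nonneg_left hcos (by positivity : (0:ℝ) ≤ φ + φ ^ 3),
      mul_nonneg (mul_nonneg hφ0.le hφ0.le) (by nlinarith : (0:ℝ) ≤ φ - φ ^ 3)]
  have hu3 : u < 1 := by
    have := Real.tan_lt_tan_of_nonneg_of_lt_pi_div_two hφ0.le (by linarith) hφ4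
    rwa [Real.tan_pi_div_four] at this
  have hu0 : 0 < u := by linarith
  have h2u : (0:ℝ) < 2 - u := by linarith
  -- key identity from the equation
  have pyth := Real.sin_sq_add_cos_sq x
  have heq2 : (Real.cos φ - Real.sin φ) * (2 * Real.cos x ^ 2 - 1)
      = Real.cos φ * (1 - 2 * Real.sin x * Real.cos x) := by
    rw [hψ, Real.cos_two_mul, Real.sin_two_mul, hudef, Real.tan_eq_sin_div_cos] at heq
    field_simp at heq
    linarith [heq]
  have key : Real.sin x * (2 * Real.cos φ - Real.sin φ) = Real.sin φ * Real.cos x := by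
    have hcs : Real.cos x - Real.sin x ≠ 0 := by linarith
    apply mul_left_cancel₀ hcs
    linear_combination heq2 - (2 * Real.cos φ - Real.sin φ) * pyth
  -- tan x = u / (2 - u)
  have htanx : Real.tan x = u / (2 - u) := by
    rw [eq_div_iff h2u.ne', hudef, Real.tan_eq_sin_div_cos, Real.tan_eq_sin_div_cos]
    field_simp
    linear_combination key
  set t := u / (2 - u) with htdef
  have ht0 : 0 < t := div_pos hu0 h2u
  have ht' : 2 * t = u + t * u := by
    have : t * (2 - u) = u := by rw [htdef]; field_simp
    linear_combination this
  -- x = arctan t, so θ = 2 arctan t - φ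
  have hx_eq : x = Real.arctan t := by
    rw [← htanx, Real.arctan_tan (by linarith) hx2]
  have hθeq : θ = 2 * Real.arctan t - φ := by
    rw [← hx_eq]; simp only [hxdef]; ring
  clear_value x u t
  clear heq hxdef hudef htdef hψ htanx hx_eq
  -- arctan bounds
  have hA1 : Real.arctan t ≤ t := aux_arctan_le_self ht0.le
  have hA2 : t - t ^ 3 / 3 ≤ Real.arctan t := aux_le_arctan ht0.le
  -- t bounds
  have htu : t ≤ u := by nlinarith [ht', mul_nonneg ht0.le (by linarith : (0:ℝ) ≤ 1 - u)]
  have hstep2 : t ≤ u / 2 + u ^ 2 / 2 := by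
    nlinarith [ht', mul_le_mul_of_nonneg_right htu hu0.le]
  have hup : 2 * t ≤ u + u ^ 2 / 2 + u ^ 3 / 2 := by
    nlinarith [ht', mul_le_mul_of_nonneg_right hstep2 hu0.le]
  have hlo : u + u ^ 2 / 2 ≤ 2 * t := by
    have htu2 : u / 2 ≤ t := by nlinarith [ht', mul_nonneg ht0.le hu0.le]
    nlinarith [ht', mul_le_mul_of_nonneg_right htu2 hu0.le]
  have hu2φ : u ≤ 2 * φ := by nlinarith [hu2, mul_pos (mul_pos hφ0 hφ0) (by linarith : (0:ℝ) < 1 - φ)]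
  have hu3c : u ^ 3 ≤ 8 * φ ^ 3 := by nlinarith [pow_le_pow_left₀ hu0.le hu2φ 3]
  have ht3 : t ^ 3 ≤ u ^ 3 := by
    have := pow_le_pow_left₀ ht0.le htu 3
    simpa using this
  have e1 : φ ^ 4 ≤ φ ^ 3 := pow_le_pow_of_le_one hφ0.le hφ1.le (by norm_num)
  have e2 : φ ^ 6 ≤ φ ^ 3 := pow_le_pow_of_le_one hφ0.le hφ1.le (by norm_num)
  have hd : u ^ 2 ≤ φ ^ 2 + 3 * φ ^ 3 := by
    nlinarith [pow_le_pow_left₀ hu0.le hu2 2, e1, e2]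
  have hd2 : φ ^ 2 ≤ u ^ 2 := pow_le_pow_left₀ hφ0.le hu1.le 2
  rw [abs_le]
  constructor
  · -- lower bound
    have h1 : 2 * Real.arctan t ≥ 2 * t - (2/3) * t ^ 3 := by linarith
    have h2 : t ^ 3 ≤ 8 * φ ^ 3 := le_trans ht3 hu3c
    rw [hθeq]
    linarith
  · -- upper bound
    rw [hθeq]
    linarith
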